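/- Fix m, β > 0 and λ₀, λ₁ ∈ ℝ, and set λ̃ = λ₀ + λ₁. For θ ∈ ℝ define, using the principal branch Log of the complex logarithm, f(θ) = Log(1 − e^{−mβ cosh θ − 2πiλ₀}) − Log(1 − e^{−mβ cosh θ + 2πiλ₀}) − Log(1 − e^{−mβ cosh θ − 2πiλ̃}) + Log(1 − e^{−mβ cosh θ + 2πiλ̃}) and g(θ) = Log(1 − e^{−mβ cosh θ + 2πiλ₀}) + Log(1 − e^{−mβ cosh θ − 2πiλ₀}) − Log(1 − e^{−mβ cosh θ + 2πiλ̃}) − Log(1 − e^{−mβ cosh θ − 2πiλ̃}). Suppose ν, η : ℂ → ℂ satisfy, for all real θ, ν(θ + iπ/2) − ν(θ − iπ/2) = −i f(θ) and η(θ + iπ/2) + η(θ − iπ/2) = g(θ). Define G(θ) = −exp(πiλ₁ − λ₁θ + (i/2)ν(θ) + (1/2)η(θ)) and H(θ) = exp(−λ₁θ + (i/2)ν(θ) − (1/2)η(θ)). Then for every real θ: G(θ + iπ/2)/H(θ − iπ/2) = −(1 − e^{−mβ cosh θ − 2πiλ₀})/(1 − e^{−mβ cosh θ − 2πiλ̃})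 and G(θ − iπ/2)/H(θ + iπ/2) = −e^{2πiλ₁}(1 − e^{−mβ cosh θ + 2πiλ₀})/(1 − e^{−mβ cosh θ + 2πiλ̃}). -/

import Mathlib

open Complex

/-- `E m β lam θ = 1 − exp(−mβ cosh θ − 2πi·lam)`; note
`1 − exp(−mβ cosh θ + 2πi·lam) = E m β (−lam) θ`. -/
noncomputable def Efac (m β lam : ℝ) (θ : ℝ) : ℂ :=
  1 - Complex.exp (-(m * β * Real.cosh θ : ℝ) - 2 * (Real.pi : ℂ) * Complex.I * (lam : ℂ))

/-- The function `f` of the paper (branch of logarithms: principal `Log`). -/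
noncomputable def fLog (m β lam₀ lamt : ℝ) (θ : ℝ) : ℂ :=
  Complex.log (Efac m β lam₀ θ) - Complex.log (Efac m β (-lam₀) θ)
    - Complex.log (Efac m β lamt θ) + Complex.log (Efac m β (-lamt) θ)

/-- The function `g` of the paper (branch of logarithms: principal `Log`). -/
noncomputable def gLog (m β lam₀ lamt : ℝ) (θ : ℝ) : ℂ :=
  Complex.log (Efac m β (-lam₀) θ) + Complex.log (Efac m β lam₀ θ)
    - Complex.log (Efac m β (-lamt) θ) - Complex.log (Efac m β lamt θ)

lemma Efac_ne_zero (m β lam : ℝ) (hm : 0 < m) (hβ : 0 < β) (θ : ℝ) :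
    Efac m β lam θ ≠ 0 := by
  unfold Efac
  intro h
  have h1 : Complex.exp (-(m * β * Real.cosh θ : ℝ) - 2 * (Real.pi : ℂ) * Complex.I * (lam : ℂ)) = 1 := by
    linear_combination -h
  have habs := congrArg (‖·‖) h1
  rw [Complex.norm_exp] at habs
  have hre : (-(m * β * Real.cosh θ : ℝ) - 2 * (Real.pi : ℂ) * Complex.I * (lam : ℂ)).re
      = -(m * β * Real.cosh θ) := by
    simp [Complex.sub_re, Complex.mul_re, Complex.mul_im]
  rw [hre] at habs
  simp at habs
  have hc := Real.cosh_pos (x := θ)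
  rcases habs with (h | h) | h
  · exact hm.ne' h
  · exact hβ.ne' h
  · exact hc.ne' h

/-- Given `ν, η` satisfying the jump relations
`ν(θ+iπ/2) − ν(θ−iπ/2) = −i f(θ)` and `η(θ+iπ/2) + η(θ−iπ/2) = g(θ)` for real `θ`, the
functions `G(θ) = −exp(πiλ₁ − λ₁θ + (i/2)ν(θ) + (1/2)η(θ))` and
`H(θ) = exp(−λ₁θ + (i/2)ν(θ) − (1/2)η(θ))` satisfy the two functional relations
(2.15)–(2.16) of the paper. -/
theorem GH_functional_relations
    (m β lam₀ lam₁ : ℝ) (hm : 0 < m) (hβ : 0 < β)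
    (ν η : ℂ → ℂ)
    (hν : ∀ θ : ℝ, ν ((θ : ℂ) + (Real.pi / 2 : ℝ) * Complex.I)
        - ν ((θ : ℂ) - (Real.pi / 2 : ℝ) * Complex.I)
        = -Complex.I * fLog m β lam₀ (lam₀ + lam₁) θ)
    (hη : ∀ θ : ℝ, η ((θ : ℂ) + (Real.pi / 2 : ℝ) * Complex.I)
        + η ((θ : ℂ) - (Real.pi / 2 : ℝ) * Complex.I)
        = gLog m β lam₀ (lam₀ + lam₁) θ)
    (G H : ℂ → ℂ)
    (hG : ∀ θ : ℂ, G θ = -Complex.exp ((Real.pi : ℂ) * Complex.I * (lam₁ : ℂ)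
        - (lam₁ : ℂ) * θ + (Complex.I / 2) * ν θ + (1 / 2 : ℂ) * η θ))
    (hH : ∀ θ : ℂ, H θ = Complex.exp (-(lam₁ : ℂ) * θ
        + (Complex.I / 2) * ν θ - (1 / 2 : ℂ) * η θ)) :
    ∀ θ : ℝ,
      G ((θ : ℂ) + (Real.pi / 2 : ℝ) * Complex.I) / H ((θ : ℂ) - (Real.pi / 2 : ℝ) * Complex.I)
        = -(Efac m β lam₀ θ / Efac m β (lam₀ + lam₁) θ) ∧
      G ((θ : ℂ) - (Real.pi / 2 : ℝ) * Complex.I) / H ((θ : ℂ) + (Real.pi / 2 : ℝ) * Complex.I)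
        = -Complex.exp (2 * (Real.pi : ℂ) * Complex.I * (lam₁ : ℂ)) *
            (Efac m β (-lam₀) θ / Efac m β (-(lam₀ + lam₁)) θ) := by
  intro θ
  have h0 := Efac_ne_zero m β lam₀ hm hβ θ
  have h0' := Efac_ne_zero m β (-lam₀) hm hβ θ
  have ht := Efac_ne_zero m β (lam₀ + lam₁) hm hβ θ
  have ht' := Efac_ne_zero m β (-(lam₀ + lam₁)) hm hβ θ
  have h1 := hν θ
  have h2 := hη θ
  simp only [fLog, gLog] at h1 h2
  rw [hG, hH, hG, hH]
  constructor
  · rw [neg_div, ← Complex.exp_sub]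
    have hX : ((Real.pi : ℂ) * Complex.I * (lam₁ : ℂ)
        - (lam₁ : ℂ) * ((θ : ℂ) + (Real.pi / 2 : ℝ) * Complex.I)
        + (Complex.I / 2) * ν ((θ : ℂ) + (Real.pi / 2 : ℝ) * Complex.I)
        + (1 / 2 : ℂ) * η ((θ : ℂ) + (Real.pi / 2 : ℝ) * Complex.I))
        - (-(lam₁ : ℂ) * ((θ : ℂ) - (Real.pi / 2 : ℝ) * Complex.I)
        + (Complex.I / 2) * ν ((θ : ℂ) - (Real.pi / 2 : ℝ) * Complex.I)
        - (1 / 2 : ℂ) * η ((θ : ℂ) - (Real.pi / 2 : ℝ) * Complex.I))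
        = Complex.log (Efac m β lam₀ θ) - Complex.log (Efac m β (lam₀ + lam₁) θ) := by
      have hc : ((Real.pi / 2 : ℝ) : ℂ) = (Real.pi : ℂ) / 2 := by push_cast; ring
      linear_combination (Complex.I/2) * h1 + (1/2) * h2
        - 2 * (lam₁ : ℂ) * Complex.I * hc
        - ((Complex.log (Efac m β lam₀ θ) - Complex.log (Efac m β (-lam₀) θ)
            - Complex.log (Efac m β (lam₀+lam₁) θ) + Complex.log (Efac m β (-(lam₀+lam₁)) θ))/2)
          * Complex.I_mul_I
    rw [hX, Complex.exp_sub, Complex.exp_log h0, Complex.exp_log ht]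
  · rw [neg_div, ← Complex.exp_sub]
    have hX : ((Real.pi : ℂ) * Complex.I * (lam₁ : ℂ)
        - (lam₁ : ℂ) * ((θ : ℂ) - (Real.pi / 2 : ℝ) * Complex.I)
        + (Complex.I / 2) * ν ((θ : ℂ) - (Real.pi / 2 : ℝ) * Complex.I)
        + (1 / 2 : ℂ) * η ((θ : ℂ) - (Real.pi / 2 : ℝ) * Complex.I))
        - (-(lam₁ : ℂ) * ((θ : ℂ) + (Real.pi / 2 : ℝ) * Complex.I)
        + (Complex.I / 2) * ν ((θ : ℂ) + (Real.pi / 2 : ℝ) * Complex.I)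
        - (1 / 2 : ℂ) * η ((θ : ℂ) + (Real.pi / 2 : ℝ) * Complex.I))
        = 2 * (Real.pi : ℂ) * Complex.I * (lam₁ : ℂ)
          + (Complex.log (Efac m β (-lam₀) θ) - Complex.log (Efac m β (-(lam₀ + lam₁)) θ)) := by
      have hc : ((Real.pi / 2 : ℝ) : ℂ) = (Real.pi : ℂ) / 2 := by push_cast; ring
      linear_combination (-Complex.I/2) * h1 + (1/2) * h2
        + 2 * (lam₁ : ℂ) * Complex.I * hc
        + ((Complex.log (Efac m β lam₀ θ) - Complex.log (Efac m β (-lam₀) θ)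
            - Complex.log (Efac m β (lam₀+lam₁) θ) + Complex.log (Efac m β (-(lam₀+lam₁)) θ))/2)
          * Complex.I_mul_I
    rw [hX, Complex.exp_add, Complex.exp_sub, Complex.exp_log h0', Complex.exp_log ht']
    ring
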